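/- Let A be a real 2n×2n symplectic matrix with eigenvalues λ₁,…,λ_{2n}, and let 𝐋₁,…,𝐋_{2n} ⊂ ℂ be sets with λⱼ ∈ 𝐋ⱼ. Suppose (A1) 0 ∉ Im(𝐋ⱼ) for each j (i.e. every element of 𝐋ⱼ has nonzero imaginary part), and (A2) for all j, k: if {z⁻¹ : z ∈ 𝐋ⱼ} ∩ {conj(w) : w ∈ 𝐋ₖ} ≠ ∅ then j = k. Then all eigenvalues of A are distinct and lie on the unit circle. -/

import Mathlib

open Matrix in
/-- The standard Poisson matrix `J = [[0, Iₙ], [-Iₙ, 0]]`. -/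
def poissonMatrix (R : Type*) [Ring R] (n : ℕ) :
    Matrix (Fin n ⊕ Fin n) (Fin n ⊕ Fin n) R :=
  Matrix.fromBlocks 0 1 (-1) 0

open Matrix Polynomial in
lemma eval_charpoly' {m : Type*} [DecidableEq m] [Fintype m] (M : Matrix m m ℂ) (μ : ℂ) :
    M.charpoly.eval μ = (μ • (1 : Matrix m m ℂ) - M).det := by
  rw [Matrix.charpoly, ← Polynomial.coe_evalRingHom, RingHom.map_det]
  congr 1
  ext i j
  by_cases h : i = j <;>
    simp [Matrix.charmatrix_apply, Matrix.diagonal, Matrix.one_apply, h]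

open Matrix Polynomial in
/-- Let `A` be a real symplectic matrix with (complex) eigenvalues `λ₁,…,λ_{2n}`
(with multiplicity) and let `𝐋ⱼ ∋ λⱼ` be enclosures. If (A1) every element of each
`𝐋ⱼ` has nonzero imaginary part, and (A2) `{z⁻¹ : z ∈ 𝐋ⱼ} ∩ {conj w : w ∈ 𝐋ₖ} ≠ ∅`
implies `j = k`, then all eigenvalues of `A` are distinct and lie on the unit circle. -/
theorem symplectic_eigenvalue_enclosures (n : ℕ)
    (A : Matrix (Fin n ⊕ Fin n) (Fin n ⊕ Fin n) ℝ)
    (hA : Aᵀ * poissonMatrix ℝ n * A = poissonMatrix ℝ n)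
    (lam : Fin n ⊕ Fin n → ℂ)
    (hspec : (A.map (Complex.ofReal)).charpoly = ∏ j, (X - C (lam j)))
    (L : Fin n ⊕ Fin n → Set ℂ)
    (hmem : ∀ j, lam j ∈ L j)
    (hA1 : ∀ j, ∀ z ∈ L j, z.im ≠ 0)
    (hA2 : ∀ j k, (∃ z ∈ L j, ∃ w ∈ L k, z⁻¹ = starRingEnd ℂ w) → j = k) :
    Function.Injective lam ∧ ∀ j, ‖lam j‖ = 1 := by
  set B : Matrix (Fin n ⊕ Fin n) (Fin n ⊕ Fin n) ℂ := A.map Complex.ofReal with hBdef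
  set J : Matrix (Fin n ⊕ Fin n) (Fin n ⊕ Fin n) ℂ := poissonMatrix ℂ n with hJdef
  have hJJ : J * J = -1 := by
    rw [hJdef]
    unfold poissonMatrix
    rw [Matrix.fromBlocks_multiply, ← Matrix.fromBlocks_one, Matrix.fromBlocks_neg]
    norm_num
  have hJ1 : J * (-J) = 1 := by rw [mul_neg, hJJ, neg_neg]
  have hdetJ : J.det ≠ 0 := by
    have : J.det * (-J).det = 1 := by rw [← Matrix.det_mul, hJ1, Matrix.det_one]
    exact left_ne_zero_of_mul_eq_one this
  have hJmap : (poissonMatrix ℝ n).map (Complex.ofRealHom : ℝ →+* ℂ) = poissonMatrix ℂ n := by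
    ext (i | i) (j | j) <;> simp [poissonMatrix, Matrix.one_apply, apply_ite]
  have key : Bᵀ * J * B = J := by
    have h := congrArg (fun M => M.map (Complex.ofRealHom : ℝ →+* ℂ)) hA
    simp only [Matrix.map_mul, Matrix.transpose_map, hJmap] at h
    exact h
  have hprod : ∀ μ : ℂ, (μ • (1 : Matrix (Fin n ⊕ Fin n) (Fin n ⊕ Fin n) ℂ) - B).det
      = ∏ j, (μ - lam j) := by
    intro μ
    rw [← eval_charpoly', hspec]
    simp [Polynomial.eval_prod]
  have hex : ∀ μ : ℂ, (μ • (1 : Matrix (Fin n ⊕ Fin n) (Fin n ⊕ Fin n) ℂ) - B).det = 0 →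
      ∃ k, μ = lam k := by
    intro μ h
    rw [hprod] at h
    obtain ⟨k, -, hk⟩ := Finset.prod_eq_zero_iff.mp h
    exact ⟨k, sub_eq_zero.mp hk⟩
  have hroot : ∀ j, ((lam j) • (1 : Matrix (Fin n ⊕ Fin n) (Fin n ⊕ Fin n) ℂ) - B).det = 0 := by
    intro j
    rw [hprod]
    exact Finset.prod_eq_zero (Finset.mem_univ j) (sub_self _)
  have hinv : ∀ μ : ℂ, μ ≠ 0 →
      (μ • (1 : Matrix (Fin n ⊕ Fin n) (Fin n ⊕ Fin n) ℂ) - B).det = 0 →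
      (μ⁻¹ • (1 : Matrix (Fin n ⊕ Fin n) (Fin n ⊕ Fin n) ℂ) - B).det = 0 := by
    intro μ hμ h
    have hident : (μ • (1 : Matrix (Fin n ⊕ Fin n) (Fin n ⊕ Fin n) ℂ) - Bᵀ) * J * B
        = (-μ) • (J * (μ⁻¹ • 1 - B)) := by
      rw [Matrix.sub_mul, Matrix.sub_mul, smul_mul_assoc, smul_mul_assoc, one_mul, key,
        Matrix.mul_sub, mul_smul_comm, mul_one, smul_sub, smul_smul, neg_mul,
        mul_inv_cancel₀ hμ, neg_smul, neg_smul, one_smul, sub_neg_eq_add, sub_eq_neg_add]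
    have hT : (μ • (1 : Matrix (Fin n ⊕ Fin n) (Fin n ⊕ Fin n) ℂ) - Bᵀ).det = 0 := by
      have h2 : (μ • (1 : Matrix (Fin n ⊕ Fin n) (Fin n ⊕ Fin n) ℂ) - B)ᵀ
          = μ • (1 : Matrix (Fin n ⊕ Fin n) (Fin n ⊕ Fin n) ℂ) - Bᵀ := by
        rw [Matrix.transpose_sub, Matrix.transpose_smul, Matrix.transpose_one]
      rw [← h2, Matrix.det_transpose]; exact h
    have hd := congrArg Matrix.det hident
    rw [Matrix.det_mul, Matrix.det_mul, hT, zero_mul, zero_mul, Matrix.det_smul,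
      Matrix.det_mul] at hd
    rcases mul_eq_zero.mp hd.symm with h' | h'
    · exact absurd h' (pow_ne_zero _ (neg_ne_zero.mpr hμ))
    · rcases mul_eq_zero.mp h' with h'' | h''
      · exact absurd h'' hdetJ
      · exact h''
  have hconj : ∀ μ : ℂ, (μ • (1 : Matrix (Fin n ⊕ Fin n) (Fin n ⊕ Fin n) ℂ) - B).det = 0 →
      ((starRingEnd ℂ μ) • (1 : Matrix (Fin n ⊕ Fin n) (Fin n ⊕ Fin n) ℂ) - B).det = 0 := by
    intro μ h
    have h1 : starRingEnd ℂ ((μ • (1 : Matrix (Fin n ⊕ Fin n) (Fin n ⊕ Fin n) ℂ) - B).det)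
        = 0 := by rw [h, map_zero]
    rw [RingHom.map_det, RingHom.mapMatrix_apply] at h1
    have h2 : (μ • (1 : Matrix (Fin n ⊕ Fin n) (Fin n ⊕ Fin n) ℂ) - B).map (starRingEnd ℂ)
        = (starRingEnd ℂ μ) • (1 : Matrix (Fin n ⊕ Fin n) (Fin n ⊕ Fin n) ℂ) - B := by
      ext i j
      by_cases hij : i = j <;>
        simp [Matrix.map_apply, hBdef, Matrix.one_apply, hij, Complex.conj_ofReal]
    rwa [h2] at h1
  have hne : ∀ j, lam j ≠ 0 := by
    intro j h
    exact hA1 j _ (hmem j) (by rw [h]; simp)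
  have hkey : ∀ j, (lam j)⁻¹ = starRingEnd ℂ (lam j) := by
    intro j
    obtain ⟨k, hk⟩ := hex _ (hinv _ (hne j) (hroot j))
    obtain ⟨k', hk'⟩ := hex _ (hconj _ (hroot k))
    have h5 : lam k = starRingEnd ℂ (lam k') := by
      rw [← hk', Complex.conj_conj]
    have hjk : j = k' := hA2 j k' ⟨lam j, hmem j, lam k', hmem k', by rw [hk, h5]⟩
    rw [hk, h5, ← hjk]
  have habs : ∀ j, ‖lam j‖ = 1 := by
    intro j
    have h1 : lam j * starRingEnd ℂ (lam j) = 1 := by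
      rw [← hkey j, mul_inv_cancel₀ (hne j)]
    have h2 : (Complex.normSq (lam j) : ℂ) = 1 := by
      rw [← Complex.mul_conj]; exact h1
    have h3 : Complex.normSq (lam j) = 1 := by exact_mod_cast h2
    have h4 := Complex.sq_norm (lam j)
    nlinarith [norm_nonneg (lam j)]
  refine ⟨?_, habs⟩
  intro j k h
  exact hA2 j k ⟨lam j, hmem j, lam k, hmem k, by rw [hkey j, h]⟩
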